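/- Let d ≥ 1 and let B : ℝ^d → ℝ^{d×d} be continuous and antisymmetric (B_{lj} = −B_{jl}). Fix x ∈ ℝ^d and ε ≠ 0, and let A^x be the transversal gauge vector potential centered at x, A^x_l(w) := −Σ_{j=1}^d ∫_0^1 B_{lj}(x + s(w−x)) · s · (w_j − x_j) ds. Let a := x − (ε/2)(y+z), b := x + (ε/2)(y−z), c := x + (ε/2)(y+z). Then for all y, z ∈ ℝ^d the scaled magnetic flux through the triangle with vertices a, b, c equals (1/ε)( Γ^{A^x}([a,b]) + Γ^{A^x}([b,c]) + Γ^{A^x}([c,a]) ) = ε Σ_{l,j=1}^d B̃^ε_{lj}(x,y,z) y_l z_j = γ^B_ε(x,y,z). -/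

import Mathlib

noncomputable section
open MeasureTheory Complex

/-- `ℝ^d` -/
abbrev Vd (d : ℕ) := Fin d → ℝ

/-- Circulation `Γ^A([u,v]) = Σ_l (v_l - u_l) ∫_0^1 A_l(u + s(v-u)) ds`. -/
def circA {d : ℕ} (A : Vd d → Vd d) (u v : Vd d) : ℝ :=
  ∑ l, (v l - u l) * ∫ s in (0:ℝ)..1, A (u + s • (v - u)) l

/-- `B̃^ε_{lj}(x,y,z) := (1/2)∫_{-1/2}^{1/2}dt ∫_0^1 ds s [B_{lj}(x+εs(ty-z/2)) + B_{lj}(x+εs(y/2+tz))]`. -/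
def Btil {d : ℕ} (ε : ℝ) (B : Vd d → Fin d → Fin d → ℝ) (x y z : Vd d)
    (l j : Fin d) : ℝ :=
  (2:ℝ)⁻¹ * ∫ t in (-(2:ℝ)⁻¹)..(2:ℝ)⁻¹, ∫ s in (0:ℝ)..1,
    s * (B (x + (ε * s) • (t • y - (2:ℝ)⁻¹ • z)) l j
          + B (x + (ε * s) • ((2:ℝ)⁻¹ • y + t • z)) l j)

/-- The scaled magnetic flux `γ^B_ε(x,y,z) := ε Σ_{l,j} B̃^ε_{lj}(x,y,z) y_l z_j`. -/
def gammaB {d : ℕ} (ε : ℝ) (B : Vd d → Fin d → Fin d → ℝ) (x y z : Vd d) : ℝ :=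
  ε * ∑ l, ∑ j, Btil ε B x y z l j * y l * z j

/-- The transversal gauge vector potential centered at `x`:
`A^x_l(w) := -Σ_j ∫_0^1 B_{lj}(x + s(w-x)) s (w_j - x_j) ds`. -/
def transGauge {d : ℕ} (B : Vd d → Fin d → Fin d → ℝ) (x : Vd d) (w : Vd d) : Vd d :=
  fun l => -∑ j, ∫ s in (0:ℝ)..1, B (x + s • (w - x)) l j * s * (w j - x j)

/-! Auxiliary machinery -/

lemma anti_self {d : ℕ} (M : Fin d → Fin d → ℝ) (hM : ∀ l j, M l j = -M j l)
    (a : Fin d → ℝ) : ∑ l, ∑ j, a l * a j * M l j = 0 := by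
  have h : (∑ l, ∑ j, a l * a j * M l j) = -∑ l, ∑ j, a l * a j * M l j := by
    calc (∑ l, ∑ j, a l * a j * M l j) = ∑ j, ∑ l, a l * a j * M l j := Finset.sum_comm
    _ = ∑ l, ∑ j, -(a l * a j * M l j) := by
        refine Finset.sum_congr rfl fun l _ => Finset.sum_congr rfl fun j _ => ?_
        rw [hM]; ring
    _ = -∑ l, ∑ j, a l * a j * M l j := by simp
  linarith

lemma anti_swap {d : ℕ} (M : Fin d → Fin d → ℝ) (hM : ∀ l j, M l j = -M j l)
    (a b : Fin d → ℝ) :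
    ∑ l, ∑ j, b l * a j * M l j = -∑ l, ∑ j, a l * b j * M l j := by
  calc (∑ l, ∑ j, b l * a j * M l j) = ∑ j, ∑ l, b l * a j * M l j := Finset.sum_comm
  _ = ∑ l, ∑ j, -(a l * b j * M l j) := by
      refine Finset.sum_congr rfl fun l _ => Finset.sum_congr rfl fun j _ => ?_
      rw [hM]; ring
  _ = -∑ l, ∑ j, a l * b j * M l j := by simp

lemma contract {d : ℕ} (M : Fin d → Fin d → ℝ) (hM : ∀ l j, M l j = -M j l)
    (y z : Fin d → ℝ) (α β γ δ : ℝ) :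
    ∑ l, ∑ j, (α * y l + β * z l) * (γ * y j + δ * z j) * M l j
      = (α * δ - β * γ) * ∑ l, ∑ j, y l * z j * M l j := by
  have e : ∀ l j : Fin d, (α * y l + β * z l) * (γ * y j + δ * z j) * M l j
      = (α*γ) * (y l * y j * M l j) + ((α*δ) * (y l * z j * M l j)
        + ((β*γ) * (z l * y j * M l j) + (β*δ) * (z l * z j * M l j))) := by
    intro l j; ring
  simp only [e, Finset.sum_add_distrib, ← Finset.mul_sum]
  rw [anti_self M hM y, anti_self M hM z, anti_swap M hM y z]
  ring

/-- Double integral `∫₀¹∫₀¹ B(x+s(U+σ(V-U)))_{lj} s ds dσ`. -/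
def II {d : ℕ} (B : Vd d → Fin d → Fin d → ℝ) (x U V : Vd d) (l j : Fin d) : ℝ :=
  ∫ σ in (0:ℝ)..1, ∫ s in (0:ℝ)..1, B (x + s • (U + σ • (V - U))) l j * s

/-- Double integral `∫₀¹∫₀¹ B(x+s(U+σ(V-U)))_{lj} s σ ds dσ`. -/
def JJ {d : ℕ} (B : Vd d → Fin d → Fin d → ℝ) (x U V : Vd d) (l j : Fin d) : ℝ :=
  ∫ σ in (0:ℝ)..1, ∫ s in (0:ℝ)..1, B (x + s • (U + σ • (V - U))) l j * s * σ

lemma II_anti {d : ℕ} (B : Vd d → Fin d → Fin d → ℝ)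
    (hBanti : ∀ (w : Vd d) (l j : Fin d), B w l j = -B w j l) (x U V : Vd d)
    (l j : Fin d) : II B x U V l j = -II B x U V j l := by
  unfold II
  rw [← intervalIntegral.integral_neg]
  refine intervalIntegral.integral_congr fun σ _ => ?_
  rw [← intervalIntegral.integral_neg]
  refine intervalIntegral.integral_congr fun s _ => ?_
  rw [hBanti]; ring

lemma JJ_anti {d : ℕ} (B : Vd d → Fin d → Fin d → ℝ)
    (hBanti : ∀ (w : Vd d) (l j : Fin d), B w l j = -B w j l) (x U V : Vd d)
    (l j : Fin d) : JJ B x U V l j = -JJ B x U V j l := by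
  unfold JJ
  rw [← intervalIntegral.integral_neg]
  refine intervalIntegral.integral_congr fun σ _ => ?_
  rw [← intervalIntegral.integral_neg]
  refine intervalIntegral.integral_congr fun s _ => ?_
  rw [hBanti]; ring

/-- The circulation of the transversal gauge along `[x+U, x+V]`. -/
lemma seg {d : ℕ} (B : Vd d → Fin d → Fin d → ℝ)
    (hB : ∀ l j, Continuous fun w => B w l j) (x U V : Vd d) :
    circA (transGauge B x) (x + U) (x + V)
      = -∑ l, ∑ j, (V l - U l) * (U j * II B x U V l j + (V j - U j) * JJ B x U V l j) := by
  have hpc : Continuous fun p : ℝ × ℝ => x + p.2 • (U + p.1 • (V - U)) := by fun_prop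
  have hBp : ∀ l j : Fin d,
      Continuous fun p : ℝ × ℝ => B (x + p.2 • (U + p.1 • (V - U))) l j :=
    fun l j => (hB l j).comp hpc
  have hBs : ∀ (l j : Fin d) (σ : ℝ),
      Continuous fun s : ℝ => B (x + s • (U + σ • (V - U))) l j :=
    fun l j σ => (hB l j).comp (by fun_prop)
  have hxw : ∀ w : Vd d, x + U + w - x = U + w := fun w => by abel
  have hxs : ∀ (j : Fin d) (r : ℝ), x j + U j + r - x j = U j + r := fun j r => by ring
  unfold circA transGauge
  simp only [add_sub_add_left_eq_sub, Pi.add_apply, Pi.smul_apply, Pi.sub_apply,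
    smul_eq_mul, hxw, hxs]
  have hKsplit : ∀ (l j : Fin d) (σ : ℝ),
      (∫ s in (0:ℝ)..1, B (x + s • (U + σ • (V - U))) l j * s * (U j + σ * (V j - U j)))
      = U j * (∫ s in (0:ℝ)..1, B (x + s • (U + σ • (V - U))) l j * s)
        + (V j - U j) * (∫ s in (0:ℝ)..1, B (x + s • (U + σ • (V - U))) l j * s * σ) := by
    intro l j σ
    rw [← intervalIntegral.integral_const_mul, ← intervalIntegral.integral_const_mul,
      ← intervalIntegral.integral_add
        (f := fun s => U j * (B (x + s • (U + σ • (V - U))) l j * s))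
        (g := fun s => (V j - U j) * (B (x + s • (U + σ • (V - U))) l j * s * σ))
        ((continuous_const.mul ((hBs l j σ).mul continuous_id')).intervalIntegrable 0 1)
        ((continuous_const.mul (((hBs l j σ).mul continuous_id').mul
          continuous_const)).intervalIntegrable 0 1)]
    refine intervalIntegral.integral_congr fun s _ => ?_
    ring
  simp only [hKsplit]
  have hF : ∀ l j : Fin d, Continuous fun σ : ℝ =>
      ∫ s in (0:ℝ)..1, B (x + s • (U + σ • (V - U))) l j * s :=
    fun l j => intervalIntegral.continuous_parametric_intervalIntegral_of_continuous'
      (μ := volume)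
      (f := fun σ s => B (x + s • (U + σ • (V - U))) l j * s)
      ((hBp l j).mul continuous_snd) 0 1
  have hG : ∀ l j : Fin d, Continuous fun σ : ℝ =>
      ∫ s in (0:ℝ)..1, B (x + s • (U + σ • (V - U))) l j * s * σ :=
    fun l j => intervalIntegral.continuous_parametric_intervalIntegral_of_continuous'
      (μ := volume)
      (f := fun σ s => B (x + s • (U + σ • (V - U))) l j * s * σ)
      (((hBp l j).mul continuous_snd).mul continuous_fst) 0 1
  have step : ∀ l : Fin d,
      (∫ σ in (0:ℝ)..1, -∑ j, (U j * (∫ s in (0:ℝ)..1, B (x + s • (U + σ • (V - U))) l j * s)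
          + (V j - U j) * (∫ s in (0:ℝ)..1, B (x + s • (U + σ • (V - U))) l j * s * σ)))
        = -∑ j, (U j * II B x U V l j + (V j - U j) * JJ B x U V l j) := by
    intro l
    rw [intervalIntegral.integral_neg, intervalIntegral.integral_finset_sum
      (f := fun j σ => U j * (∫ s in (0:ℝ)..1, B (x + s • (U + σ • (V - U))) l j * s)
        + (V j - U j) * (∫ s in (0:ℝ)..1, B (x + s • (U + σ • (V - U))) l j * s * σ))
      (fun j _ => (((continuous_const.mul (hF l j)).add
        (continuous_const.mul (hG l j)))).intervalIntegrable 0 1)]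
    congr 1
    refine Finset.sum_congr rfl fun j _ => ?_
    rw [intervalIntegral.integral_add
        (f := fun σ => U j * (∫ s in (0:ℝ)..1, B (x + s • (U + σ • (V - U))) l j * s))
        (g := fun σ => (V j - U j) * (∫ s in (0:ℝ)..1, B (x + s • (U + σ • (V - U))) l j * s * σ))
        ((continuous_const.mul (hF l j)).intervalIntegrable 0 1)
        ((continuous_const.mul (hG l j)).intervalIntegrable 0 1),
      intervalIntegral.integral_const_mul, intervalIntegral.integral_const_mul]
    rfl
  simp only [step, mul_neg]
  rw [Finset.sum_neg_distrib]
  congr 1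
  exact Finset.sum_congr rfl fun l _ => Finset.mul_sum _ _ _

/-- The scaled magnetic flux through the triangle with corners
`a = x - (ε/2)(y+z)`, `b = x + (ε/2)(y-z)`, `c = x + (ε/2)(y+z)` computed via the
transversal gauge equals `ε Σ_{l,j} B̃^ε_{lj}(x,y,z) y_l z_j = γ^B_ε(x,y,z)`. -/
theorem statement10 (d : ℕ) (hd : 1 ≤ d)
    (B : Vd d → Fin d → Fin d → ℝ)
    (hBcont : ∀ l j, Continuous fun w => B w l j)
    (hBanti : ∀ (w : Vd d) (l j : Fin d), B w l j = -B w j l)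
    (x : Vd d) (ε : ℝ) (hε : ε ≠ 0) :
    ∀ y z : Vd d,
      ε⁻¹ * (circA (transGauge B x) (x - (ε / 2) • (y + z)) (x + (ε / 2) • (y - z))
              + circA (transGauge B x) (x + (ε / 2) • (y - z)) (x + (ε / 2) • (y + z))
              + circA (transGauge B x) (x + (ε / 2) • (y + z)) (x - (ε / 2) • (y + z)))
        = ε * ∑ l, ∑ j, Btil ε B x y z l j * y l * z j ∧
      ε⁻¹ * (circA (transGauge B x) (x - (ε / 2) • (y + z)) (x + (ε / 2) • (y - z))
              + circA (transGauge B x) (x + (ε / 2) • (y - z)) (x + (ε / 2) • (y + z))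
              + circA (transGauge B x) (x + (ε / 2) • (y + z)) (x - (ε / 2) • (y + z)))
        = gammaB ε B x y z := by
  intro y z
  -- abbreviate the corner displacements
  have hkey : ∀ (U V : Vd d) (α β γ δ : ℝ),
      (∀ l, V l - U l = α * y l + β * z l) → (∀ j, U j = γ * y j + δ * z j) →
      (-∑ l, ∑ j, (V l - U l) * (U j * II B x U V l j + (V j - U j) * JJ B x U V l j))
        = -((α * δ - β * γ) * ∑ l, ∑ j, y l * z j * II B x U V l j) := by
    intro U V α β γ δ hVU hU
    have e : ∀ l j : Fin d,
        (V l - U l) * (U j * II B x U V l j + (V j - U j) * JJ B x U V l j)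
          = (α * y l + β * z l) * (γ * y j + δ * z j) * II B x U V l j
            + (α * y l + β * z l) * (α * y j + β * z j) * JJ B x U V l j := by
      intro l j; rw [hVU l, hVU j, hU j]; ring
    simp only [e, Finset.sum_add_distrib]
    have h0 := anti_self (JJ B x U V) (JJ_anti B hBanti x U V) (fun l => α * y l + β * z l)
    rw [contract (II B x U V) (II_anti B hBanti x U V) y z α β γ δ, h0]
    ring
  -- the three circulations
  have hc1 : circA (transGauge B x) (x - (ε / 2) • (y + z)) (x + (ε / 2) • (y - z))
      = -((ε * (-(ε/2)) - 0 * (-(ε/2))) * ∑ l, ∑ j, y l * z j *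
          II B x (-((ε / 2) • (y + z))) ((ε / 2) • (y - z)) l j) := by
    rw [sub_eq_add_neg x ((ε / 2) • (y + z)), seg B hBcont x _ _]
    refine hkey _ _ ε 0 (-(ε/2)) (-(ε/2)) (fun l => ?_) (fun j => ?_) <;>
      simp [Pi.add_apply, Pi.smul_apply, Pi.sub_apply, Pi.neg_apply, smul_eq_mul] <;> ring
  have hc2 : circA (transGauge B x) (x + (ε / 2) • (y - z)) (x + (ε / 2) • (y + z))
      = -((0 * (-(ε/2)) - ε * (ε/2)) * ∑ l, ∑ j, y l * z j *
          II B x ((ε / 2) • (y - z)) ((ε / 2) • (y + z)) l j) := by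
    rw [seg B hBcont x _ _]
    refine hkey _ _ 0 ε (ε/2) (-(ε/2)) (fun l => ?_) (fun j => ?_) <;>
      simp [Pi.add_apply, Pi.smul_apply, Pi.sub_apply, Pi.neg_apply, smul_eq_mul] <;> ring
  have hc3 : circA (transGauge B x) (x + (ε / 2) • (y + z)) (x - (ε / 2) • (y + z))
      = -(((-ε) * (ε/2) - (-ε) * (ε/2)) * ∑ l, ∑ j, y l * z j *
          II B x ((ε / 2) • (y + z)) (-((ε / 2) • (y + z))) l j) := by
    rw [sub_eq_add_neg x ((ε / 2) • (y + z)), seg B hBcont x _ _]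
    refine hkey _ _ (-ε) (-ε) (ε/2) (ε/2) (fun l => ?_) (fun j => ?_) <;>
      simp [Pi.add_apply, Pi.smul_apply, Pi.sub_apply, Pi.neg_apply, smul_eq_mul] <;> ring
  -- identify Btil with the two double integrals
  have hBtil : ∀ l j : Fin d, Btil ε B x y z l j
      = 2⁻¹ * (II B x (-((ε / 2) • (y + z))) ((ε / 2) • (y - z)) l j
                + II B x ((ε / 2) • (y - z)) ((ε / 2) • (y + z)) l j) := by
    intro l j
    have hq1 : Continuous fun p : ℝ × ℝ => x + (ε * p.2) • (p.1 • y - (2:ℝ)⁻¹ • z) := by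
      fun_prop
    have hq2 : Continuous fun p : ℝ × ℝ => x + (ε * p.2) • ((2:ℝ)⁻¹ • y + p.1 • z) := by
      fun_prop
    have hB1 : Continuous fun p : ℝ × ℝ =>
        p.2 * B (x + (ε * p.2) • (p.1 • y - (2:ℝ)⁻¹ • z)) l j :=
      continuous_snd.mul ((hBcont l j).comp hq1)
    have hB2 : Continuous fun p : ℝ × ℝ =>
        p.2 * B (x + (ε * p.2) • ((2:ℝ)⁻¹ • y + p.1 • z)) l j :=
      continuous_snd.mul ((hBcont l j).comp hq2)
    have hsplit : (∫ t in (-(2:ℝ)⁻¹)..(2:ℝ)⁻¹, ∫ s in (0:ℝ)..1,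
        s * (B (x + (ε * s) • (t • y - (2:ℝ)⁻¹ • z)) l j
              + B (x + (ε * s) • ((2:ℝ)⁻¹ • y + t • z)) l j))
        = (∫ t in (-(2:ℝ)⁻¹)..(2:ℝ)⁻¹, ∫ s in (0:ℝ)..1,
            s * B (x + (ε * s) • (t • y - (2:ℝ)⁻¹ • z)) l j)
          + ∫ t in (-(2:ℝ)⁻¹)..(2:ℝ)⁻¹, ∫ s in (0:ℝ)..1,
            s * B (x + (ε * s) • ((2:ℝ)⁻¹ • y + t • z)) l j := by
      rw [← intervalIntegral.integral_add
        ((intervalIntegral.continuous_parametric_intervalIntegral_of_continuous'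
          (μ := volume) (f := fun t s => s * B (x + (ε * s) • (t • y - (2:ℝ)⁻¹ • z)) l j)
          hB1 0 1).intervalIntegrable _ _)
        ((intervalIntegral.continuous_parametric_intervalIntegral_of_continuous'
          (μ := volume) (f := fun t s => s * B (x + (ε * s) • ((2:ℝ)⁻¹ • y + t • z)) l j)
          hB2 0 1).intervalIntegrable _ _)]
      refine intervalIntegral.integral_congr fun t _ => ?_
      have c1 : Continuous fun s : ℝ => s * B (x + (ε * s) • (t • y - (2:ℝ)⁻¹ • z)) l j :=
        continuous_id'.mul ((hBcont l j).comp (by fun_prop))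
      have c2 : Continuous fun s : ℝ => s * B (x + (ε * s) • ((2:ℝ)⁻¹ • y + t • z)) l j :=
        continuous_id'.mul ((hBcont l j).comp (by fun_prop))
      rw [← intervalIntegral.integral_add (c1.intervalIntegrable 0 1)
        (c2.intervalIntegrable 0 1)]
      exact intervalIntegral.integral_congr fun s _ => by ring
    have he1 : ∀ t s : ℝ, x + (ε * s) • (t • y - (2:ℝ)⁻¹ • z)
        = x + s • (-((ε / 2) • (y + z)) + (t + 2⁻¹) • ((ε / 2) • (y - z) - -((ε / 2) • (y + z)))) := by
      intro t s
      funext i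
      simp [Pi.add_apply, Pi.smul_apply, Pi.sub_apply, Pi.neg_apply, smul_eq_mul]
      ring
    have he2 : ∀ t s : ℝ, x + (ε * s) • ((2:ℝ)⁻¹ • y + t • z)
        = x + s • ((ε / 2) • (y - z) + (t + 2⁻¹) • ((ε / 2) • (y + z) - (ε / 2) • (y - z))) := by
      intro t s
      funext i
      simp [Pi.add_apply, Pi.smul_apply, Pi.sub_apply, Pi.neg_apply, smul_eq_mul]
      ring
    have hsh1 : (∫ t in (-(2:ℝ)⁻¹)..(2:ℝ)⁻¹, ∫ s in (0:ℝ)..1,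
          s * B (x + (ε * s) • (t • y - (2:ℝ)⁻¹ • z)) l j)
        = II B x (-((ε / 2) • (y + z))) ((ε / 2) • (y - z)) l j := by
      have e : (∫ t in (-(2:ℝ)⁻¹)..(2:ℝ)⁻¹, ∫ s in (0:ℝ)..1,
            s * B (x + (ε * s) • (t • y - (2:ℝ)⁻¹ • z)) l j)
          = ∫ t in (-(2:ℝ)⁻¹)..(2:ℝ)⁻¹, (fun σ => ∫ s in (0:ℝ)..1,
              B (x + s • (-((ε / 2) • (y + z)) + σ • ((ε / 2) • (y - z) - -((ε / 2) • (y + z))))) l j * s) (t + 2⁻¹) := by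
        refine intervalIntegral.integral_congr fun t _ => ?_
        refine intervalIntegral.integral_congr fun s _ => ?_
        rw [he1 t s]; ring
      have h' := intervalIntegral.integral_comp_add_right (a := -(2:ℝ)⁻¹) (b := (2:ℝ)⁻¹)
        (f := fun σ => ∫ s in (0:ℝ)..1,
          B (x + s • (-((ε / 2) • (y + z)) + σ • ((ε / 2) • (y - z) - -((ε / 2) • (y + z))))) l j * s)
        2⁻¹
      rw [e]
      exact h'.trans (by norm_num [II])
    have hsh2 : (∫ t in (-(2:ℝ)⁻¹)..(2:ℝ)⁻¹, ∫ s in (0:ℝ)..1,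
          s * B (x + (ε * s) • ((2:ℝ)⁻¹ • y + t • z)) l j)
        = II B x ((ε / 2) • (y - z)) ((ε / 2) • (y + z)) l j := by
      have e : (∫ t in (-(2:ℝ)⁻¹)..(2:ℝ)⁻¹, ∫ s in (0:ℝ)..1,
            s * B (x + (ε * s) • ((2:ℝ)⁻¹ • y + t • z)) l j)
          = ∫ t in (-(2:ℝ)⁻¹)..(2:ℝ)⁻¹, (fun σ => ∫ s in (0:ℝ)..1,
              B (x + s • ((ε / 2) • (y - z) + σ • ((ε / 2) • (y + z) - (ε / 2) • (y - z)))) l j * s) (t + 2⁻¹) := by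
        refine intervalIntegral.integral_congr fun t _ => ?_
        refine intervalIntegral.integral_congr fun s _ => ?_
        rw [he2 t s]; ring
      have h' := intervalIntegral.integral_comp_add_right (a := -(2:ℝ)⁻¹) (b := (2:ℝ)⁻¹)
        (f := fun σ => ∫ s in (0:ℝ)..1,
          B (x + s • ((ε / 2) • (y - z) + σ • ((ε / 2) • (y + z) - (ε / 2) • (y - z)))) l j * s)
        2⁻¹
      rw [e]
      exact h'.trans (by norm_num [II])
    rw [Btil, hsplit, hsh1, hsh2]
  -- put everything together
  have main : ε⁻¹ * (circA (transGauge B x) (x - (ε / 2) • (y + z)) (x + (ε / 2) • (y - z))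
              + circA (transGauge B x) (x + (ε / 2) • (y - z)) (x + (ε / 2) • (y + z))
              + circA (transGauge B x) (x + (ε / 2) • (y + z)) (x - (ε / 2) • (y + z)))
        = ε * ∑ l, ∑ j, Btil ε B x y z l j * y l * z j := by
    rw [hc1, hc2, hc3]
    have eR : ∀ l j : Fin d, Btil ε B x y z l j * y l * z j
        = 2⁻¹ * (y l * z j * II B x (-((ε / 2) • (y + z))) ((ε / 2) • (y - z)) l j)
          + 2⁻¹ * (y l * z j * II B x ((ε / 2) • (y - z)) ((ε / 2) • (y + z)) l j) := by
      intro l j; rw [hBtil l j]; ring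
    simp only [eR, Finset.sum_add_distrib, ← Finset.mul_sum]
    field_simp
    ring
  exact ⟨main, by rw [main]; simp only [gammaB]⟩
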